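/- arXiv:0906.4499 — 8 statements merged into one kernel-verified Lean document; each statement's English description precedes it below -/
import Mathlib

section
/- Let ℓ be an ordered generic length vector of length n that is special, meaning: every subset of {1,…,n−1} of cardinality n−2 together with n is long (equivalently no (n−2)-element subset J of {1,…,n−1} has J ∪ {n} short), but there exists an (n−3)-element subset J of {1,…,n−1} with J ∪ {n} short. Then the set of three-element subsets of {1,…,n−1} whose complement in {1,…,n−1}, together with {n}, is short, is totally ordered under the dominance order (J₁ ≤ J₂ iff componentwise inequality of the sorted elements). -/
open Finset

/-- The sum of `ℓ` over `J` is less than the sum over the complement in `{1,…,n}`. -/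
def Short (n : ℕ) (ℓ : ℕ → ℝ) (J : Finset ℕ) : Prop :=
  ∑ j ∈ J, ℓ j < ∑ j ∈ Finset.Icc 1 n \ J, ℓ j

/-- `J` is long iff its complement in `{1,…,n}` is short. -/
def Long (n : ℕ) (ℓ : ℕ → ℝ) (J : Finset ℕ) : Prop :=
  Short n ℓ (Finset.Icc 1 n \ J)

/-- All entries positive. -/
def LengthVec (n : ℕ) (ℓ : ℕ → ℝ) : Prop := ∀ i ∈ Finset.Icc 1 n, 0 < ℓ i

/-- `ℓ₁ ≤ … ≤ ℓₙ`. -/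
def OrderedVec (n : ℕ) (ℓ : ℕ → ℝ) : Prop :=
  ∀ i j : ℕ, 1 ≤ i → i ≤ j → j ≤ n → ℓ i ≤ ℓ j

/-- No subset has sum equal to the sum of its complement. -/
def Generic (n : ℕ) (ℓ : ℕ → ℝ) : Prop :=
  ∀ J ⊆ Finset.Icc 1 n, ∑ j ∈ J, ℓ j ≠ ∑ j ∈ Finset.Icc 1 n \ J, ℓ j

/-- Dominance order: an injective order-preserving map `φ : J₁ → J₂` with `x ≤ φ x`. -/
def DomLe (J₁ J₂ : Finset ℕ) : Prop :=
  ∃ φ : ℕ → ℕ, Set.InjOn φ ↑J₁ ∧ (∀ x ∈ J₁, φ x ∈ J₂) ∧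
    (∀ x ∈ J₁, ∀ y ∈ J₁, x < y → φ x < φ y) ∧ ∀ x ∈ J₁, x ≤ φ x

/-- `Ṡ_k(ℓ)`: subsets `J ⊆ {1,…,n−1}` of cardinality `k` with `J ∪ {n}` short. -/
def SdotSet (n : ℕ) (ℓ : ℕ → ℝ) (k : ℕ) : Set (Finset ℕ) :=
  {J | J ⊆ Finset.Icc 1 (n-1) ∧ J.card = k ∧ Short n ℓ (insert n J)}

/-- `Ṡ(ℓ)`: subsets `J ⊆ {1,…,n−1}` with `J ∪ {n}` short. -/
def Sdot (n : ℕ) (ℓ : ℕ → ℝ) : Set (Finset ℕ) :=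
  {J | J ⊆ Finset.Icc 1 (n-1) ∧ Short n ℓ (insert n J)}

/-- Special: `Ṡ_{n−3}(ℓ) = ∅ ≠ Ṡ_{n−4}(ℓ)`. -/
def SpecialVec (n : ℕ) (ℓ : ℕ → ℝ) : Prop :=
  SdotSet n ℓ (n-3) = ∅ ∧ SdotSet n ℓ (n-4) ≠ ∅

/-- `T` is the type of `ℓ`: the minimal three-element long subset of `{1,…,n−1}`. -/
def IsType (n : ℕ) (ℓ : ℕ → ℝ) (T : Finset ℕ) : Prop :=
  T ⊆ Finset.Icc 1 (n-1) ∧ T.card = 3 ∧ Long n ℓ T ∧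
    ∀ T' ⊆ Finset.Icc 1 (n-1), T'.card = 3 → Long n ℓ T' → DomLe T T'

lemma domle_refl' (J : Finset ℕ) : DomLe J J :=
  ⟨id, Function.injective_id.injOn, fun x hx => hx, fun _ _ _ _ h => h, fun x _ => le_rfl⟩

lemma domle_insert' {B : Finset ℕ} {u v : ℕ} (hu : u ∉ B) (hv : v ∉ B) (huv : u < v) :
    DomLe (insert u B) (insert v B) := by
  classical
  set φ : ℕ → ℕ := fun z =>
    if u ≤ z ∧ z < v then
      (insert v (B.filter fun w => z < w ∧ w < v)).min' (Finset.insert_nonempty _ _)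
    else z with hφ
  have hifval : ∀ z, u ≤ z → z < v →
      φ z = (insert v (B.filter fun w => z < w ∧ w < v)).min' (Finset.insert_nonempty _ _) := by
    intro z h1 h2
    simp only [hφ]
    rw [if_pos ⟨h1, h2⟩]
  have helse : ∀ z, ¬ (u ≤ z ∧ z < v) → φ z = z := by
    intro z h
    simp only [hφ]
    rw [if_neg h]
  have hmem : ∀ z, u ≤ z → z < v → φ z ∈ insert v B ∧ z < φ z := by
    intro z h1 h2
    have hm := Finset.min'_mem (insert v (B.filter fun w => z < w ∧ w < v))
      (Finset.insert_nonempty _ _)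
    rw [← hifval z h1 h2] at hm
    rcases Finset.mem_insert.mp hm with h | h
    · exact ⟨by rw [h]; exact Finset.mem_insert_self _ _, by omega⟩
    · obtain ⟨hB, hlt⟩ := Finset.mem_filter.mp h
      exact ⟨Finset.mem_insert_of_mem hB, hlt.1⟩
  have hmle : ∀ z, u ≤ z → z < v → ∀ w ∈ insert v (B.filter fun w => z < w ∧ w < v), φ z ≤ w := by
    intro z h1 h2 w hw
    rw [hifval z h1 h2]
    exact Finset.min'_le _ _ hw
  have hmono : ∀ x ∈ insert u B, ∀ y ∈ insert u B, x < y → φ x < φ y := by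
    intro x hx y hy hxy
    by_cases hxc : u ≤ x ∧ x < v
    · have huy : u ≤ y := by omega
      by_cases hyc : u ≤ y ∧ y < v
      · have hyB : y ∈ B := by
          rcases Finset.mem_insert.mp hy with rfl | h
          · omega
          · exact h
        have h1 : φ x ≤ y := hmle x hxc.1 hxc.2 y
          (Finset.mem_insert_of_mem (Finset.mem_filter.mpr ⟨hyB, hxy, hyc.2⟩))
        have h2 := (hmem y hyc.1 hyc.2).2
        omega
      · have hne : y ≠ v := by
          intro h; subst h
          rcases Finset.mem_insert.mp hy with h' | h'
          · omega
          · exact hv h'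
        have hyv : v < y := by
          rcases Nat.lt_or_ge y v with h | h
          · exact absurd ⟨huy, h⟩ hyc
          · omega
        have h1 : φ x ≤ v := hmle x hxc.1 hxc.2 v (Finset.mem_insert_self _ _)
        have h2 : φ y = y := helse y hyc
        omega
    · have h1 : φ x = x := helse x hxc
      by_cases hyc : u ≤ y ∧ y < v
      · have := (hmem y hyc.1 hyc.2).2
        omega
      · have h2 : φ y = y := helse y hyc
        omega
  have hmaps : ∀ x ∈ insert u B, φ x ∈ insert v B := by
    intro x hx
    by_cases hxc : u ≤ x ∧ x < v
    · exact (hmem x hxc.1 hxc.2).1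
    · rw [helse x hxc]
      rcases Finset.mem_insert.mp hx with rfl | h
    -- x = u: then hxc fails but u ≤ u ∧ u < v holds, contradiction
      · exact absurd ⟨le_rfl, huv⟩ hxc
      · exact Finset.mem_insert_of_mem h
  have hle : ∀ x ∈ insert u B, x ≤ φ x := by
    intro x hx
    by_cases hxc : u ≤ x ∧ x < v
    · exact ((hmem x hxc.1 hxc.2).2).le
    · rw [helse x hxc]
  have hinj : Set.InjOn φ ↑(insert u B) := by
    intro x hx y hy hxy
    by_contra hne
    rcases Nat.lt_or_ge x y with h | h
    · have := hmono x (Finset.mem_coe.mp hx) y (Finset.mem_coe.mp hy) h; omega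
    · have hyx : y < x := by omega
      have := hmono y (Finset.mem_coe.mp hy) x (Finset.mem_coe.mp hx) hyx; omega
  exact ⟨φ, hinj, hmaps, hmono, hle⟩

/-- For an ordered special length vector, Ṡ_{n−4}(ℓ) is totally
ordered under the dominance order. -/
theorem sdot_totally_ordered (n : ℕ) (ℓ : ℕ → ℝ) (hn : 5 ≤ n)
    (hpos : LengthVec n ℓ) (hord : OrderedVec n ℓ) (hgen : Generic n ℓ)
    (hspec : SpecialVec n ℓ) :
    ∀ J₁ ∈ SdotSet n ℓ (n-4), ∀ J₂ ∈ SdotSet n ℓ (n-4),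
      DomLe J₁ J₂ ∨ DomLe J₂ J₁ := by
  classical
  intro J₁ hJ₁ J₂ hJ₂
  obtain ⟨hs₁, hc₁, hsh₁⟩ := hJ₁
  obtain ⟨hs₂, hc₂, hsh₂⟩ := hJ₂
  set I : Finset ℕ := Finset.Icc 1 (n-1) with hI
  set T₁ : Finset ℕ := I \ J₁ with hT₁
  set T₂ : Finset ℕ := I \ J₂ with hT₂
  have hpos' : ∀ i ∈ I, 0 < ℓ i := by
    intro i hi
    obtain ⟨h1, h2⟩ := Finset.mem_Icc.mp hi
    exact hpos i (Finset.mem_Icc.mpr ⟨h1, by omega⟩)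
  have hnI : n ∉ I := by
    simp only [hI, Finset.mem_Icc]
    omega
  have short_iff : ∀ J : Finset ℕ, J ⊆ I → Short n ℓ (insert n J) →
      ℓ n + ∑ j ∈ J, ℓ j < ∑ j ∈ I \ J, ℓ j := by
    intro J hJ h
    have hnJ : n ∉ J := fun h' => hnI (hJ h')
    have e1 : ∑ j ∈ insert n J, ℓ j = ℓ n + ∑ j ∈ J, ℓ j := Finset.sum_insert hnJ
    have e2 : Finset.Icc 1 n \ insert n J = I \ J := by
      ext z
      simp only [Finset.mem_sdiff, Finset.mem_Icc, Finset.mem_insert, not_or, hI]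
      constructor
      · rintro ⟨⟨ha, hb⟩, hc, hd⟩
        exact ⟨⟨ha, by omega⟩, hd⟩
      · rintro ⟨⟨ha, hb⟩, hc⟩
        exact ⟨⟨ha, by omega⟩, by omega, hc⟩
    unfold Short at h
    rw [e1, e2] at h
    exact h
  have A1 := short_iff J₁ hs₁ hsh₁
  have A2 := short_iff J₂ hs₂ hsh₂
  have B1 : ∑ j ∈ T₁, ℓ j + ∑ j ∈ J₁, ℓ j = ∑ j ∈ I, ℓ j := Finset.sum_sdiff hs₁
  have B2 : ∑ j ∈ T₂, ℓ j + ∑ j ∈ J₂, ℓ j = ∑ j ∈ I, ℓ j := Finset.sum_sdiff hs₂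
  have C : ∑ j ∈ T₁ ∪ T₂, ℓ j + ∑ j ∈ T₁ ∩ T₂, ℓ j = ∑ j ∈ T₁, ℓ j + ∑ j ∈ T₂, ℓ j :=
    Finset.sum_union_inter
  have D : ∑ j ∈ T₁ ∪ T₂, ℓ j ≤ ∑ j ∈ I, ℓ j :=
    Finset.sum_le_sum_of_subset_of_nonneg
      (Finset.union_subset Finset.sdiff_subset Finset.sdiff_subset)
      (fun i hi _ => (hpos' i hi).le)
  have hln : 0 < ℓ n := hpos n (Finset.mem_Icc.mpr ⟨by omega, le_rfl⟩)
  have key : ℓ n < ∑ j ∈ T₁ ∩ T₂, ℓ j := by linarith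
  have hIcard : I.card = n - 1 := by
    rw [hI, Nat.card_Icc]
    omega
  have hTc₁ : T₁.card = 3 := by
    rw [hT₁, Finset.card_sdiff_of_subset hs₁, hIcard, hc₁]
    omega
  have hTc₂ : T₂.card = 3 := by
    rw [hT₂, Finset.card_sdiff_of_subset hs₂, hIcard, hc₂]
    omega
  have hint2 : 2 ≤ (T₁ ∩ T₂).card := by
    by_contra h
    push_neg at h
    have : (T₁ ∩ T₂).card = 0 ∨ (T₁ ∩ T₂).card = 1 := by omega
    rcases this with h0 | h1
    · rw [Finset.card_eq_zero] at h0
      rw [h0, Finset.sum_empty] at key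
      linarith
    · obtain ⟨m, hm⟩ := Finset.card_eq_one.mp h1
      rw [hm, Finset.sum_singleton] at key
      have hmI : m ∈ I := by
        have : m ∈ T₁ ∩ T₂ := hm ▸ Finset.mem_singleton_self m
        exact Finset.sdiff_subset (Finset.inter_subset_left this)
      obtain ⟨h1m, h2m⟩ := Finset.mem_Icc.mp hmI
      have := hord m n h1m (by omega) le_rfl
      linarith
  have hle3 : (T₁ ∩ T₂).card ≤ 3 := by
    rw [← hTc₁]
    exact Finset.card_le_card Finset.inter_subset_left
  by_cases h3 : (T₁ ∩ T₂).card = 3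
  · have e1 : T₁ ∩ T₂ = T₁ :=
      Finset.eq_of_subset_of_card_le Finset.inter_subset_left (by omega)
    have e2 : T₁ ∩ T₂ = T₂ :=
      Finset.eq_of_subset_of_card_le Finset.inter_subset_right (by omega)
    have hTT : T₁ = T₂ := e1.symm.trans e2
    have hJeq : J₁ = J₂ := by
      have h' : I \ T₁ = I \ T₂ := by rw [hTT]
      rw [hT₁, hT₂, Finset.sdiff_sdiff_self_left, Finset.sdiff_sdiff_self_left,
        Finset.inter_eq_right.mpr hs₁, Finset.inter_eq_right.mpr hs₂] at h'
      exact h'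
    exact Or.inl (hJeq ▸ domle_refl' J₁)
  · have h2 : (T₁ ∩ T₂).card = 2 := by omega
    have hd₁ : (T₁ \ T₂).card = 1 := by
      have e : T₁ \ T₂ = T₁ \ (T₁ ∩ T₂) := by
        rw [Finset.sdiff_inter_self_left]
      rw [e, Finset.card_sdiff_of_subset Finset.inter_subset_left, hTc₁, h2]
    have hd₂ : (T₂ \ T₁).card = 1 := by
      have e : T₂ \ T₁ = T₂ \ (T₁ ∩ T₂) := by
        rw [Finset.inter_comm, Finset.sdiff_inter_self_left]
      rw [e, Finset.card_sdiff_of_subset Finset.inter_subset_right, hTc₂, h2]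
    obtain ⟨u, hu⟩ := Finset.card_eq_one.mp hd₁
    obtain ⟨v, hv⟩ := Finset.card_eq_one.mp hd₂
    have huu : u ∈ T₁ ∧ u ∉ T₂ := Finset.mem_sdiff.mp (hu ▸ Finset.mem_singleton_self u)
    have hvv : v ∈ T₂ ∧ v ∉ T₁ := Finset.mem_sdiff.mp (hv ▸ Finset.mem_singleton_self v)
    set B : Finset ℕ := I \ (T₁ ∪ T₂) with hB
    have memT₁ : ∀ z, z ∈ T₁ ↔ z ∈ I ∧ z ∉ J₁ := by
      intro z
      rw [hT₁]
      simp [Finset.mem_sdiff]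
    have memT₂ : ∀ z, z ∈ T₂ ↔ z ∈ I ∧ z ∉ J₂ := by
      intro z
      rw [hT₂]
      simp [Finset.mem_sdiff]
    have hJ₁e : J₁ = insert v B := by
      ext z
      simp only [Finset.mem_insert, hB, Finset.mem_sdiff, Finset.mem_union]
      constructor
      · intro hz
        have hzI : z ∈ I := hs₁ hz
        have hzT₁ : z ∉ T₁ := fun h => ((memT₁ z).mp h).2 hz
        by_cases hzT₂ : z ∈ T₂
        · left
          have : z ∈ T₂ \ T₁ := Finset.mem_sdiff.mpr ⟨hzT₂, hzT₁⟩
          rw [hv] at this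
          exact Finset.mem_singleton.mp this
        · right
          exact ⟨hzI, fun h => h.elim hzT₁ hzT₂⟩
      · rintro (rfl | ⟨hzI, hz⟩)
        · have hvI := ((memT₂ z).mp hvv.1).1
          by_contra h
          exact hvv.2 ((memT₁ z).mpr ⟨hvI, h⟩)
        · by_contra h
          exact hz (Or.inl ((memT₁ z).mpr ⟨hzI, h⟩))
    have hJ₂e : J₂ = insert u B := by
      ext z
      simp only [Finset.mem_insert, hB, Finset.mem_sdiff, Finset.mem_union]
      constructor
      · intro hz
        have hzI : z ∈ I := hs₂ hz
        have hzT₂ : z ∉ T₂ := fun h => ((memT₂ z).mp h).2 hz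
        by_cases hzT₁ : z ∈ T₁
        · left
          have : z ∈ T₁ \ T₂ := Finset.mem_sdiff.mpr ⟨hzT₁, hzT₂⟩
          rw [hu] at this
          exact Finset.mem_singleton.mp this
        · right
          exact ⟨hzI, fun h => h.elim hzT₁ hzT₂⟩
      · rintro (rfl | ⟨hzI, hz⟩)
        · have huI := ((memT₁ z).mp huu.1).1
          by_contra h
          exact huu.2 ((memT₂ z).mpr ⟨huI, h⟩)
        · by_contra h
          exact hz (Or.inr ((memT₂ z).mpr ⟨hzI, h⟩))
    have huB : u ∉ B := by
      intro h
      rw [hB] at h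
      exact (Finset.mem_sdiff.mp h).2 (Finset.mem_union_left _ huu.1)
    have hvB : v ∉ B := by
      intro h
      rw [hB] at h
      exact (Finset.mem_sdiff.mp h).2 (Finset.mem_union_right _ hvv.1)
    have hne : u ≠ v := fun h => huu.2 (h ▸ hvv.1)
    rcases lt_or_gt_of_ne hne with hlt | hgt
    · refine Or.inr ?_
      rw [hJ₁e, hJ₂e]
      exact domle_insert' huB hvB hlt
    · refine Or.inl ?_
      rw [hJ₁e, hJ₂e]
      exact domle_insert' hvB huB hgt
end

section
/- Let ℓ be an ordered special length vector of length n. Then {n−5, n−3, n−1} is not long with respect to ℓ. -/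
open Finset

/-- For an ordered special length vector, {n−5,n−3,n−1} is not long. -/
theorem not_long_n5n3n1 (n : ℕ) (ℓ : ℕ → ℝ) (hn : 6 ≤ n)
    (hpos : LengthVec n ℓ) (hord : OrderedVec n ℓ) (hgen : Generic n ℓ)
    (hspec : SpecialVec n ℓ) :
    ¬ Long n ℓ {n-5, n-3, n-1} := by
  intro hL
  unfold Long Short at hL
  have hn5 : 1 ≤ n - 5 := by omega
  have hT : ({n-5, n-3, n-1} : Finset ℕ) ⊆ Finset.Icc 1 n := by
    intro x hx
    simp only [Finset.mem_insert, Finset.mem_singleton] at hx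
    rcases hx with h | h | h <;> simp [Finset.mem_Icc] <;> omega
  rw [sdiff_sdiff_right_self, inf_eq_inter, Finset.inter_eq_right.mpr hT] at hL
  have hsub : ({n-4, n-2, n} : Finset ℕ) ⊆ Finset.Icc 1 n \ {n-5, n-3, n-1} := by
    intro x hx
    simp only [Finset.mem_insert, Finset.mem_singleton] at hx
    simp only [Finset.mem_sdiff, Finset.mem_Icc, Finset.mem_insert,
      Finset.mem_singleton]
    rcases hx with h | h | h <;> constructor <;> try omega
    all_goals omega
  have hle : ∑ j ∈ ({n-4, n-2, n} : Finset ℕ), ℓ j ≤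
      ∑ j ∈ Finset.Icc 1 n \ {n-5, n-3, n-1}, ℓ j := by
    apply Finset.sum_le_sum_of_subset_of_nonneg hsub
    intro i hi _
    exact le_of_lt (hpos i (Finset.mem_sdiff.mp hi).1)
  have e1 : ∑ j ∈ ({n-5, n-3, n-1} : Finset ℕ), ℓ j = ℓ (n-5) + ℓ (n-3) + ℓ (n-1) := by
    rw [Finset.sum_insert (by simp; omega), Finset.sum_insert (by simp; omega),
      Finset.sum_singleton]; ring
  have e2 : ∑ j ∈ ({n-4, n-2, n} : Finset ℕ), ℓ j = ℓ (n-4) + ℓ (n-2) + ℓ n := by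
    rw [Finset.sum_insert (by simp; omega), Finset.sum_insert (by simp; omega),
      Finset.sum_singleton]; ring
  have o1 : ℓ (n-5) ≤ ℓ (n-4) := hord _ _ (by omega) (by omega) (by omega)
  have o2 : ℓ (n-3) ≤ ℓ (n-2) := hord _ _ (by omega) (by omega) (by omega)
  have o3 : ℓ (n-1) ≤ ℓ n := hord _ _ (by omega) (by omega) (by omega)
  rw [e1] at hL
  rw [e2] at hle
  linarith
end

section
/- Let ℓ be an ordered special length vector of length n. Then the type of ℓ (the minimal three-element long subset of {1,…,n−1}) is one of: {n−3,n−2,n−1}, {i,n−2,n−1} for some 1 ≤ i ≤ n−4, {n−4,n−3,n−1}, or {n−4,n−3,n−2}. -/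
open Finset

lemma sorted_three (T : Finset ℕ) (h : T.card = 3) :
    ∃ a b c : ℕ, a < b ∧ b < c ∧ T = {a, b, c} := by
  obtain ⟨a, b, c, hab, hac, hbc, rfl⟩ := Finset.card_eq_three.mp h
  have perm : ∀ x y z : ℕ, ({a,b,c} : Finset ℕ) = {x,y,z} → x < y → y < z →
      ∃ p q r : ℕ, p < q ∧ q < r ∧ ({a,b,c} : Finset ℕ) = {p,q,r} :=
    fun x y z he h1 h2 => ⟨x, y, z, h1, h2, he⟩
  rcases lt_trichotomy a b with h1 | h1 | h1
  · rcases lt_trichotomy b c with h2 | h2 | h2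
    · exact ⟨a, b, c, h1, h2, rfl⟩
    · omega
    · rcases lt_trichotomy a c with h3 | h3 | h3
      · exact ⟨a, c, b, h3, h2, by ext t; simp; tauto⟩
      · omega
      · exact ⟨c, a, b, h3, h1, by ext t; simp; tauto⟩
  · omega
  · rcases lt_trichotomy a c with h2 | h2 | h2
    · exact ⟨b, a, c, h1, h2, by ext t; simp; tauto⟩
    · omega
    · rcases lt_trichotomy b c with h3 | h3 | h3
      · exact ⟨b, c, a, h3, h2, by ext t; simp; tauto⟩
      · omega
      · exact ⟨c, b, a, h3, h1, by ext t; simp; tauto⟩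

lemma not_long_aux (n : ℕ) (ℓ : ℕ → ℝ)
    (hpos : LengthVec n ℓ)
    (a b c x y z : ℕ) (hab : a < b) (hbc : b < c)
    (hxy : x < y) (hyz : y < z)
    (hsub : ({a, b, c} : Finset ℕ) ⊆ Finset.Icc 1 n)
    (hx : x ∈ Finset.Icc 1 n) (hy : y ∈ Finset.Icc 1 n) (hz : z ∈ Finset.Icc 1 n)
    (hxT : x ∉ ({a, b, c} : Finset ℕ)) (hyT : y ∉ ({a, b, c} : Finset ℕ))
    (hzT : z ∉ ({a, b, c} : Finset ℕ))
    (hax : ℓ a ≤ ℓ x) (hby : ℓ b ≤ ℓ y) (hcz : ℓ c ≤ ℓ z)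
    (hlong : Long n ℓ {a, b, c}) : False := by
  unfold Long Short at hlong
  have hTc : Finset.Icc 1 n \ (Finset.Icc 1 n \ ({a,b,c} : Finset ℕ)) = {a,b,c} := by
    rw [sdiff_sdiff_right_self, Finset.inf_eq_inter]
    exact Finset.inter_eq_right.mpr hsub
  rw [hTc] at hlong
  have hsumT : ∑ j ∈ ({a,b,c} : Finset ℕ), ℓ j = ℓ a + ℓ b + ℓ c := by
    rw [Finset.sum_insert (by simp; omega), Finset.sum_insert (by simp; omega),
      Finset.sum_singleton]
    ring
  have hsumX : ∑ j ∈ ({x,y,z} : Finset ℕ), ℓ j = ℓ x + ℓ y + ℓ z := by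
    rw [Finset.sum_insert (by simp; omega), Finset.sum_insert (by simp; omega),
      Finset.sum_singleton]
    ring
  have hss : ({x,y,z} : Finset ℕ) ⊆ Finset.Icc 1 n \ ({a,b,c} : Finset ℕ) := by
    intro t ht
    simp only [Finset.mem_insert, Finset.mem_singleton] at ht
    rw [Finset.mem_sdiff]
    rcases ht with rfl | rfl | rfl <;> exact ⟨by assumption, by assumption⟩
  have h1 : ∑ j ∈ ({x,y,z} : Finset ℕ), ℓ j ≤ ∑ j ∈ Finset.Icc 1 n \ ({a,b,c} : Finset ℕ), ℓ j :=
    Finset.sum_le_sum_of_subset_of_nonneg hss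
      (fun i hi _ => le_of_lt (hpos i (Finset.mem_sdiff.mp hi).1))
  rw [hsumT] at hlong
  rw [hsumX] at h1
  linarith

theorem type_classification' (n : ℕ) (ℓ : ℕ → ℝ) (hn : 5 ≤ n)
    (hpos : LengthVec n ℓ) (hord : OrderedVec n ℓ)
    (T : Finset ℕ) (hTsub : T ⊆ Finset.Icc 1 (n-1)) (hTcard : T.card = 3)
    (hTlong : Long n ℓ T) :
    T = {n-3, n-2, n-1} ∨
    (∃ i : ℕ, 1 ≤ i ∧ i ≤ n-4 ∧ T = {i, n-2, n-1}) ∨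
    T = {n-4, n-3, n-1} ∨
    T = {n-4, n-3, n-2} := by
  obtain ⟨a, b, c, hab, hbc, rfl⟩ := sorted_three T hTcard
  have ha : a ∈ Finset.Icc 1 (n-1) := hTsub (by simp)
  have hc : c ∈ Finset.Icc 1 (n-1) := hTsub (by simp)
  rw [Finset.mem_Icc] at ha hc
  have hsub : ({a,b,c} : Finset ℕ) ⊆ Finset.Icc 1 n := by
    intro t ht; have := hTsub ht; rw [Finset.mem_Icc] at this ⊢; omega
  -- case analysis
  have hICC : ∀ x : ℕ, 1 ≤ x → x ≤ n → x ∈ Finset.Icc 1 n := by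
    intro x h1 h2; rw [Finset.mem_Icc]; exact ⟨h1, h2⟩
  by_cases hc1 : c = n - 1
  · by_cases hb1 : b = n - 2
    · -- T = {a, n-2, n-1}
      subst hb1 hc1
      by_cases ha1 : a = n - 3
      · left; rw [ha1]
      · right; left; exact ⟨a, ha.1, by omega, rfl⟩
    · by_cases hb2 : b = n - 3
      · by_cases ha1 : a = n - 4
        · right; right; left; rw [ha1, hb2, hc1]
        · exfalso
          have haN : a ≤ n - 5 := by omega
          exact not_long_aux n ℓ hpos a b c (a+1) (n-2) n hab hbc (by omega) (by omega)
            hsub (hICC _ (by omega) (by omega)) (hICC _ (by omega) (by omega))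
            (hICC _ (by omega) (by omega))
            (by simp; omega) (by simp; omega) (by simp; omega)
            (hord a (a+1) ha.1 (by omega) (by omega))
            (hord b (n-2) (by omega) (by omega) (by omega))
            (hord c n (by omega) (by omega) le_rfl) hTlong
      · exfalso
        have hbN : b ≤ n - 4 := by omega
        exact not_long_aux n ℓ hpos a b c (n-3) (n-2) n hab hbc (by omega) (by omega)
          hsub (hICC _ (by omega) (by omega)) (hICC _ (by omega) (by omega))
          (hICC _ (by omega) (by omega))
          (by simp; omega) (by simp; omega) (by simp; omega)
          (hord a (n-3) ha.1 (by omega) (by omega))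
          (hord b (n-2) (by omega) (by omega) (by omega))
          (hord c n (by omega) (by omega) le_rfl) hTlong
  · by_cases hc2 : c = n - 2
    · by_cases hb2 : b = n - 3
      · by_cases ha1 : a = n - 4
        · right; right; right; rw [ha1, hb2, hc2]
        · exfalso
          exact not_long_aux n ℓ hpos a b c (a+1) (n-1) n hab hbc (by omega) (by omega)
            hsub (hICC _ (by omega) (by omega)) (hICC _ (by omega) (by omega))
            (hICC _ (by omega) (by omega))
            (by simp; omega) (by simp; omega) (by simp; omega)
            (hord a (a+1) ha.1 (by omega) (by omega))
            (hord b (n-1) (by omega) (by omega) (by omega))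
            (hord c n (by omega) (by omega) le_rfl) hTlong
      · exfalso
        exact not_long_aux n ℓ hpos a b c (n-3) (n-1) n hab hbc (by omega) (by omega)
          hsub (hICC _ (by omega) (by omega)) (hICC _ (by omega) (by omega))
          (hICC _ (by omega) (by omega))
          (by simp; omega) (by simp; omega) (by simp; omega)
          (hord a (n-3) ha.1 (by omega) (by omega))
          (hord b (n-1) (by omega) (by omega) (by omega))
          (hord c n (by omega) (by omega) le_rfl) hTlong
    · exfalso
      have hcN : c ≤ n - 3 := by omega
      exact not_long_aux n ℓ hpos a b c (n-2) (n-1) n hab hbc (by omega) (by omega)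
        hsub (hICC _ (by omega) (by omega)) (hICC _ (by omega) (by omega))
        (hICC _ (by omega) (by omega))
        (by simp; omega) (by simp; omega) (by simp; omega)
        (hord a (n-2) ha.1 (by omega) (by omega))
        (hord b (n-1) (by omega) (by omega) (by omega))
        (hord c n (by omega) (by omega) le_rfl) hTlong

/-- The type of an ordered special length vector is one of
{n−3,n−2,n−1}, {i,n−2,n−1} (1 ≤ i ≤ n−4), {n−4,n−3,n−1}, {n−4,n−3,n−2}. -/
theorem type_classification (n : ℕ) (ℓ : ℕ → ℝ) (hn : 5 ≤ n)
    (hpos : LengthVec n ℓ) (hord : OrderedVec n ℓ) (hgen : Generic n ℓ)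
    (hspec : SpecialVec n ℓ) (T : Finset ℕ) (hT : IsType n ℓ T) :
    T = {n-3, n-2, n-1} ∨
    (∃ i : ℕ, 1 ≤ i ∧ i ≤ n-4 ∧ T = {i, n-2, n-1}) ∨
    T = {n-4, n-3, n-1} ∨
    T = {n-4, n-3, n-2} := by
  obtain ⟨hTsub, hTcard, hTlong, _⟩ := hT
  exact type_classification' n ℓ hn hpos hord T hTsub hTcard hTlong
end

section
/- Let ℓ be an ordered special length vector of type {n−4, n−3, n−2} (i.e., {n−4,n−3,n−2} is long with respect to ℓ and ℓ is special). Then for every J ∈ Ṡ(ℓ) (i.e., J ⊆ {1,…,n−1} with J ∪ {n} short), one has J ∪ {n} ≤ {1,…,n−5, n−1, n} in the dominance partial order. Consequently, the collection Ṡ(ℓ) is the same for all ordered special length vectors of this type, so there is exactly one chamber of type {n−4,n−3,n−2} up to permutation. -/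
open Finset

section Aux

variable (n : ℕ) (ℓ : ℕ → ℝ)

lemma short_iff' {J : Finset ℕ} (hJ : J ⊆ Finset.Icc 1 n) :
    Short n ℓ J ↔ 2 * ∑ j ∈ J, ℓ j < ∑ j ∈ Finset.Icc 1 n, ℓ j := by
  unfold Short
  rw [← Finset.sum_sdiff hJ]
  constructor <;> intro h <;> linarith

lemma domle_sum (hpos : LengthVec n ℓ) (hord : OrderedVec n ℓ)
    {A B : Finset ℕ} (hA : A ⊆ Finset.Icc 1 n) (hB : B ⊆ Finset.Icc 1 n)
    (h : DomLe A B) : ∑ j ∈ A, ℓ j ≤ ∑ j ∈ B, ℓ j := by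
  obtain ⟨φ, hinj, hmaps, _, hle⟩ := h
  calc ∑ j ∈ A, ℓ j ≤ ∑ j ∈ A, ℓ (φ j) := by
        apply Finset.sum_le_sum
        intro i hi
        have h1 := Finset.mem_Icc.mp (hA hi)
        have h2 := Finset.mem_Icc.mp (hB (hmaps i hi))
        exact hord i (φ i) h1.1 (hle i hi) h2.2
    _ = ∑ j ∈ A.image φ, ℓ j :=
        (Finset.sum_image (fun x hx y hy hxy => hinj hx hy hxy)).symm
    _ ≤ ∑ j ∈ B, ℓ j := by
        apply Finset.sum_le_sum_of_subset_of_nonneg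
        · intro x hx
          obtain ⟨a, ha, rfl⟩ := Finset.mem_image.mp hx
          exact hmaps a ha
        · intro i hi _
          exact (hpos i (hB hi)).le

lemma sdot_char (hn : 5 ≤ n) (hpos : LengthVec n ℓ) (hord : OrderedVec n ℓ)
    (hlong : Long n ℓ {n-4, n-3, n-2}) :
    Sdot n ℓ = {J | J ⊆ Finset.Icc 1 (n-1) ∧
      DomLe (insert n J) (insert n (insert (n-1) (Finset.Icc 1 (n-5))))} := by
  have hMeq : Finset.Icc 1 n \ {n-4, n-3, n-2}
      = insert n (insert (n-1) (Finset.Icc 1 (n-5))) := by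
    ext x
    simp only [Finset.mem_sdiff, Finset.mem_Icc, Finset.mem_insert, Finset.mem_singleton]
    omega
  have hMsub : insert n (insert (n-1) (Finset.Icc 1 (n-5))) ⊆ Finset.Icc 1 n := by
    intro x hx
    simp only [Finset.mem_insert, Finset.mem_Icc] at hx ⊢
    omega
  have hTsub : ({n-4, n-3, n-2} : Finset ℕ) ⊆ Finset.Icc 1 n := by
    intro x hx
    simp only [Finset.mem_insert, Finset.mem_singleton] at hx
    simp only [Finset.mem_Icc]
    omega
  have hTsum : ∑ j ∈ ({n-4, n-3, n-2} : Finset ℕ), ℓ j = ℓ (n-4) + ℓ (n-3) + ℓ (n-2) := by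
    rw [Finset.sum_insert (by simp only [Finset.mem_insert, Finset.mem_singleton]; omega),
      Finset.sum_insert (by simp only [Finset.mem_singleton]; omega), Finset.sum_singleton]
    ring
  -- T is long in the "2∑ > S" form
  have hTlong : ∑ j ∈ Finset.Icc 1 n, ℓ j
      < 2 * ∑ j ∈ ({n-4, n-3, n-2} : Finset ℕ), ℓ j := by
    have h0 : Short n ℓ (Finset.Icc 1 n \ {n-4, n-3, n-2}) := hlong
    rw [short_iff' n ℓ Finset.sdiff_subset] at h0
    have := Finset.sum_sdiff hTsub (f := ℓ)
    linarith
  ext J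
  simp only [Sdot, Set.mem_setOf_eq]
  constructor
  · rintro ⟨hJsub, hJshort⟩
    refine ⟨hJsub, ?_⟩
    have hJb : ∀ z ∈ J, 1 ≤ z ∧ z ≤ n - 1 := fun z hz => Finset.mem_Icc.mp (hJsub hz)
    have hinsub : insert n J ⊆ Finset.Icc 1 n := by
      intro x hx
      simp only [Finset.mem_insert] at hx
      simp only [Finset.mem_Icc]
      rcases hx with rfl | hx
      · omega
      · have := hJb x hx; omega
    have hS : 2 * ∑ j ∈ insert n J, ℓ j < ∑ j ∈ Finset.Icc 1 n, ℓ j :=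
      (short_iff' n ℓ hinsub).mp hJshort
    -- Claim: any non-maximal element of J is ≤ n-5
    have hC : ∀ a ∈ J, ∀ b ∈ J, a < b → a ≤ n - 5 := by
      intro a ha b hb hab
      by_contra hcon
      have ha' := hJb a ha
      have hb' := hJb b hb
      have hna : n - 4 ≤ a := by omega
      have hAsub : ({a, b, n} : Finset ℕ) ⊆ insert n J := by
        intro x hx
        simp only [Finset.mem_insert, Finset.mem_singleton] at hx
        simp only [Finset.mem_insert]
        rcases hx with rfl | rfl | rfl
        · exact Or.inr ha
        · exact Or.inr hb
        · exact Or.inl rfl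
      have hAsum : ∑ j ∈ ({a, b, n} : Finset ℕ), ℓ j = ℓ a + ℓ b + ℓ n := by
        rw [Finset.sum_insert (by simp only [Finset.mem_insert, Finset.mem_singleton]; omega),
          Finset.sum_insert (by simp only [Finset.mem_singleton]; omega), Finset.sum_singleton]
        ring
      have h1 : ∑ j ∈ ({a, b, n} : Finset ℕ), ℓ j ≤ ∑ j ∈ insert n J, ℓ j := by
        apply Finset.sum_le_sum_of_subset_of_nonneg hAsub
        intro i hi _
        exact (hpos i (hinsub hi)).le
      have e1 : ℓ (n-4) ≤ ℓ a := hord (n-4) a (by omega) hna (by omega)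
      have e2 : ℓ (n-3) ≤ ℓ b := hord (n-3) b (by omega) (by omega) (by omega)
      have e3 : ℓ (n-2) ≤ ℓ n := hord (n-2) n (by omega) (by omega) le_rfl
      rw [hTsum] at hTlong
      rw [hAsum] at h1
      linarith
    -- the dominance map
    refine ⟨fun x => if x = n then n else if x ≤ n - 5 then x else n - 1, ?_, ?_, ?_, ?_⟩
    · -- InjOn, via strict monotonicity
      have hmono : ∀ x ∈ insert n J, ∀ y ∈ insert n J, x < y →
          (if x = n then n else if x ≤ n - 5 then x else n - 1)
            < (if y = n then n else if y ≤ n - 5 then y else n - 1) := by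
        intro x hx y hy hxy
        simp only [Finset.mem_insert] at hx hy
        rcases hy with rfl | hy
        · rcases hx with rfl | hx
          · exact absurd hxy (lt_irrefl _)
          · have := hJb x hx
            split_ifs <;> omega
        · have hy' := hJb y hy
          rcases hx with rfl | hx
          · omega
          · have hx' := hJb x hx
            have hxle : x ≤ n - 5 := hC x hx y hy hxy
            split_ifs <;> omega
      intro x hx y hy h
      by_contra hne
      rcases Nat.lt_or_ge x y with hlt | hge
      · exact absurd h (Nat.ne_of_lt (hmono x (Finset.mem_coe.mp hx) y (Finset.mem_coe.mp hy) hlt))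
      · have hlt : y < x := lt_of_le_of_ne hge (fun e => hne e.symm)
        exact absurd h.symm
          (Nat.ne_of_lt (hmono y (Finset.mem_coe.mp hy) x (Finset.mem_coe.mp hx) hlt))
    · intro x hx
      simp only [Finset.mem_insert] at hx
      simp only [Finset.mem_insert, Finset.mem_Icc]
      rcases hx with rfl | hx
      · simp
      · have := hJb x hx
        split_ifs <;> omega
    · intro x hx y hy hxy
      simp only [Finset.mem_insert] at hx hy
      rcases hy with rfl | hy
      · rcases hx with rfl | hx
        · exact absurd hxy (lt_irrefl _)
        · have := hJb x hx
          beta_reduce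
          split_ifs <;> omega
      · have hy' := hJb y hy
        rcases hx with rfl | hx
        · omega
        · have hx' := hJb x hx
          have hxle : x ≤ n - 5 := hC x hx y hy hxy
          beta_reduce
          split_ifs <;> omega
    · intro x hx
      simp only [Finset.mem_insert] at hx
      rcases hx with rfl | hx
      · simp
      · have := hJb x hx
        beta_reduce
        split_ifs <;> omega
  · rintro ⟨hJsub, hdom⟩
    refine ⟨hJsub, ?_⟩
    have hJb : ∀ z ∈ J, 1 ≤ z ∧ z ≤ n - 1 := fun z hz => Finset.mem_Icc.mp (hJsub hz)
    have hinsub : insert n J ⊆ Finset.Icc 1 n := by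
      intro x hx
      simp only [Finset.mem_insert] at hx
      simp only [Finset.mem_Icc]
      rcases hx with rfl | hx
      · omega
      · have := hJb x hx; omega
    have hMshort : Short n ℓ (insert n (insert (n-1) (Finset.Icc 1 (n-5)))) := by
      have h0 : Short n ℓ (Finset.Icc 1 n \ {n-4, n-3, n-2}) := hlong
      rwa [hMeq] at h0
    have hsum := domle_sum n ℓ hpos hord hinsub hMsub hdom
    rw [short_iff' n ℓ hinsub]
    rw [short_iff' n ℓ hMsub] at hMshort
    linarith

end Aux

/-- For type {n−4,n−3,n−2}, every J ∈ Ṡ(ℓ) satisfies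
J ∪ {n} ≤ {1,…,n−5,n−1,n}; consequently Ṡ(ℓ) is determined by the type, so
there is exactly one chamber of this type up to permutation. -/
theorem unique_chamber_low_type (n : ℕ) (ℓ : ℕ → ℝ) (hn : 5 ≤ n)
    (hpos : LengthVec n ℓ) (hord : OrderedVec n ℓ) (hgen : Generic n ℓ)
    (hspec : SpecialVec n ℓ) (hT : IsType n ℓ {n-4, n-3, n-2}) :
    (∀ J ∈ Sdot n ℓ,
      DomLe (insert n J) (insert n (insert (n-1) (Finset.Icc 1 (n-5))))) ∧
    (∀ ℓ' : ℕ → ℝ, LengthVec n ℓ' → OrderedVec n ℓ' → Generic n ℓ' →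
      SpecialVec n ℓ' → IsType n ℓ' {n-4, n-3, n-2} → Sdot n ℓ = Sdot n ℓ') := by
  have hlong : Long n ℓ {n-4, n-3, n-2} := hT.2.2.1
  constructor
  · intro J hJ
    rw [sdot_char n ℓ hn hpos hord hlong] at hJ
    exact hJ.2
  · intro ℓ' h1 h2 _ _ h5
    rw [sdot_char n ℓ hn hpos hord hlong, sdot_char n ℓ' hn h1 h2 h5.2.2.1]
end

section
/- Let ℓ be an ordered special length vector of type {n−4,n−3,n−2} with n ≥ 5. Then |Ṡ_1(ℓ)| = n−1, |Ṡ_2(ℓ)| = C(n−5,2) + 4(n−5), |Ṡ_{n−5}(ℓ)| = 4(n−5)+1, and |Ṡ_{n−4}(ℓ)| = 4. -/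
open Finset

lemma choose_plus_four (m : ℕ) : (m+4).choose 2 = m.choose 2 + (4*m+6) := by
  have h : ∀ k : ℕ, (k+1).choose 2 = k.choose 2 + k := by
    intro k; simp [Nat.choose_succ_succ, Nat.choose_one_right]; omega
  rw [show m+4 = (m+3)+1 from rfl, h, show m+3 = (m+2)+1 from rfl, h,
    show m+2 = (m+1)+1 from rfl, h, h]; omega


/-- Cardinalities of Ṡ_k for an ordered special length vector of
type {n−4,n−3,n−2}. -/
theorem sdot_cards_low_type (n : ℕ) (ℓ : ℕ → ℝ) (hn : 5 ≤ n)
    (hpos : LengthVec n ℓ) (hord : OrderedVec n ℓ) (hgen : Generic n ℓ)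
    (hspec : SpecialVec n ℓ) (hT : IsType n ℓ {n-4, n-3, n-2}) :
    (SdotSet n ℓ 1).ncard = n-1 ∧
    (SdotSet n ℓ 2).ncard = Nat.choose (n-5) 2 + 4*(n-5) ∧
    (SdotSet n ℓ (n-5)).ncard = 4*(n-5) + 1 ∧
    (SdotSet n ℓ (n-4)).ncard = 4 := by
  obtain ⟨hTsub, hTcard, hTlong, hTmin⟩ := hT
  set A : Finset ℕ := Icc 1 (n-5) with hA_def
  set Q : Finset ℕ := {n-4, n-3, n-2, n-1} with hQ_def
  set S5 : ℝ := ∑ j ∈ A, ℓ j with hS5_def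
  set total : ℝ := ∑ j ∈ Icc 1 n, ℓ j with htotal_def
  have memQ : ∀ x, x ∈ Q ↔ x = n-4 ∨ x = n-3 ∨ x = n-2 ∨ x = n-1 := by
    intro x; simp [hQ_def]
  have memA : ∀ x, x ∈ A ↔ 1 ≤ x ∧ x ≤ n-5 := by intro x; simp [hA_def]
  have hAcard : A.card = n-5 := by rw [hA_def, Nat.card_Icc]; omega
  have hQsubIcc : Q ⊆ Icc 1 (n-1) := by
    intro x hx; rw [memQ] at hx; simp [mem_Icc]; omega
  have hQcard : Q.card = 4 := by
    rw [hQ_def, card_insert_of_notMem (by simp; omega),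
      card_insert_of_notMem (by simp; omega), card_insert_of_notMem (by simp; omega),
      card_singleton]
  have hsplit : Icc 1 n = A ∪ {n-4, n-3, n-2, n-1, n} := by
    ext x; simp [hA_def, mem_Icc]; omega
  have hdisj : Disjoint A ({n-4, n-3, n-2, n-1, n} : Finset ℕ) := by
    rw [Finset.disjoint_left]; intro x hx hx'
    simp [hA_def, mem_Icc] at hx; simp at hx'; omega
  have htot : total = S5 + (ℓ (n-4) + ℓ (n-3) + ℓ (n-2) + ℓ (n-1) + ℓ n) := by
    rw [htotal_def, hsplit, Finset.sum_union hdisj,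
      Finset.sum_insert (by simp; omega), Finset.sum_insert (by simp; omega),
      Finset.sum_insert (by simp; omega), Finset.sum_insert (by simp; omega),
      Finset.sum_singleton]
    ring
  have hshort : ∀ J ⊆ Icc 1 (n-1),
      (Short n ℓ (insert n J) ↔ 2*(ℓ n + ∑ j ∈ J, ℓ j) < total) := by
    intro J hJ
    have hnJ : n ∉ J := fun h => by have := hJ h; simp [mem_Icc] at this; omega
    have hins : insert n J ⊆ Icc 1 n := by
      intro x hx; rcases Finset.mem_insert.1 hx with h | h
      · simp [mem_Icc]; omega
      · have := hJ h; simp [mem_Icc] at this ⊢; omega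
    unfold Short
    rw [Finset.sum_sdiff_eq_sub hins, Finset.sum_insert hnJ]
    constructor <;> intro <;> linarith
  have hkey : S5 + ℓ (n-1) + ℓ n < ℓ (n-4) + ℓ (n-3) + ℓ (n-2) := by
    have hTsub' : ({n-4, n-3, n-2} : Finset ℕ) ⊆ Icc 1 n := by
      intro x hx; simp at hx; simp [mem_Icc]; omega
    unfold Long Short at hTlong
    rw [Finset.sum_sdiff_eq_sub hTsub', Finset.sdiff_sdiff_eq_self hTsub',
      Finset.sum_insert (by simp; omega), Finset.sum_insert (by simp; omega),
      Finset.sum_singleton, ← htotal_def] at hTlong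
    linarith [htot.le, htot.ge]
  have hposS : ∀ i, 1 ≤ i → i ≤ n → 0 < ℓ i := fun i h1 h2 =>
    hpos i (by simp [mem_Icc]; omega)
  have hS5nonneg : 0 ≤ S5 :=
    Finset.sum_nonneg fun i hi => by rw [memA] at hi; exact (hposS i hi.1 (by omega)).le
  have hlen1 : ∀ q ∈ Q, ℓ q ≤ ℓ (n-1) := by
    intro q hq; rw [memQ] at hq; exact hord q (n-1) (by omega) (by omega) (by omega)
  have h2n : ℓ (n-2) ≤ ℓ n := hord (n-2) n (by omega) (by omega) le_rfl
  have hsingleA : ∀ x ∈ A, ℓ x ≤ S5 := by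
    intro x hx
    exact Finset.single_le_sum (f := ℓ)
      (fun i hi => by rw [memA] at hi; exact (hposS i hi.1 (by omega)).le) hx
  have hAQdisj : ∀ x, x ∈ A → x ∈ Q → False := by
    intro x hx hq; rw [memA] at hx; rw [memQ] at hq; omega
  have hIccAQ : ∀ x, x ∈ Icc 1 (n-1) ↔ x ∈ A ∨ x ∈ Q := by
    intro x; rw [memA, memQ, mem_Icc]; omega
  have hpairQ : ∀ x ∈ Q, ∀ y ∈ Q, x < y → ℓ x + ℓ y ≤ ℓ (n-2) + ℓ (n-1) := by
    intro x hx y hy hxy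
    rw [memQ] at hx hy
    have h1 : ℓ x ≤ ℓ (n-2) := hord x (n-2) (by omega) (by omega) (by omega)
    have h2 : ℓ y ≤ ℓ (n-1) := hord y (n-1) (by omega) (by omega) (by omega)
    linarith
  have hpairQ' : ∀ x ∈ Q, ∀ y ∈ Q, x < y → ℓ (n-4) + ℓ (n-3) ≤ ℓ x + ℓ y := by
    intro x hx y hy hxy
    rw [memQ] at hx hy
    have h1 : ℓ (n-4) ≤ ℓ x := hord (n-4) x (by omega) (by omega) (by omega)
    have h2 : ℓ (n-3) ≤ ℓ y := hord (n-3) y (by omega) (by omega) (by omega)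
    linarith
  refine ⟨?_, ?_, ?_, ?_⟩
  -- Ṡ₁
  · have e1 : SdotSet n ℓ 1 = ↑((Icc 1 (n-1)).image (fun j => ({j} : Finset ℕ))) := by
      ext J
      simp only [SdotSet, Set.mem_setOf_eq, Finset.coe_image, Set.mem_image, Finset.mem_coe]
      constructor
      · rintro ⟨hsub, hcard, -⟩
        obtain ⟨j, rfl⟩ := Finset.card_eq_one.1 hcard
        exact ⟨j, by simpa using hsub, rfl⟩
      · rintro ⟨j, hj, rfl⟩
        have hj' := mem_Icc.1 hj
        have hsub : ({j} : Finset ℕ) ⊆ Icc 1 (n-1) := by simpa using hj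
        refine ⟨hsub, card_singleton j, ?_⟩
        rw [hshort _ hsub, Finset.sum_singleton]
        have : ℓ j ≤ ℓ (n-1) := hord j (n-1) hj'.1 hj'.2 (by omega)
        linarith [htot.le, hkey]
    rw [e1, Set.ncard_coe_finset,
      Finset.card_image_of_injective _ Finset.singleton_injective, Nat.card_Icc]
    omega
  -- Ṡ₂
  · have e2 : SdotSet n ℓ 2 = ↑(powersetCard 2 (Icc 1 (n-1)) \ powersetCard 2 Q) := by
      ext J
      simp only [SdotSet, Set.mem_setOf_eq, Finset.mem_coe, mem_sdiff, mem_powersetCard]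
      constructor
      · rintro ⟨hsub, hcard, hsh⟩
        refine ⟨⟨hsub, hcard⟩, ?_⟩
        rintro ⟨hQsub, -⟩
        obtain ⟨a, b, hab, rfl⟩ := Finset.card_eq_two.1 hcard
        have ha : a ∈ Q := hQsub (by simp)
        have hb : b ∈ Q := hQsub (by simp)
        rw [hshort _ hsub, Finset.sum_insert (by simpa using hab), Finset.sum_singleton] at hsh
        have hbnd : ℓ (n-4) + ℓ (n-3) ≤ ℓ a + ℓ b := by
          rcases lt_or_gt_of_ne hab with h | h
          · exact hpairQ' a ha b hb h
          · linarith [hpairQ' b hb a ha h]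
        linarith [htot.le, hkey]
      · rintro ⟨⟨hsub, hcard⟩, hnot⟩
        refine ⟨hsub, hcard, ?_⟩
        have hex : ∃ a ∈ J, a ∉ Q := by
          by_contra h; push_neg at h; exact hnot ⟨fun x hx => h x hx, hcard⟩
        obtain ⟨a, haJ, haQ⟩ := hex
        have haA : a ∈ A := by
          have := (hIccAQ a).1 (hsub haJ); tauto
        have hcard' : (J.erase a).card = 1 := by
          rw [Finset.card_erase_of_mem haJ, hcard]
        obtain ⟨b, hb⟩ := Finset.card_eq_one.1 hcard'
        have hbJ : b ∈ J := Finset.erase_subset _ _ (hb ▸ Finset.mem_singleton_self b)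
        have hba : b ≠ a :=
          Finset.ne_of_mem_erase (hb ▸ Finset.mem_singleton_self b)
        have hJab : J = {a, b} := by
          rw [← Finset.insert_erase haJ, hb]
        rw [hshort _ hsub, hJab,
          Finset.sum_insert (by simp [Ne.symm hba]), Finset.sum_singleton]
        have h1 : ℓ a ≤ S5 := hsingleA a haA
        have h2 : ℓ b ≤ ℓ (n-1) := by
          have := mem_Icc.1 (hsub hbJ)
          exact hord b (n-1) this.1 this.2 (by omega)
        linarith [htot.le, hkey]
    rw [e2, Set.ncard_coe_finset,
      Finset.card_sdiff_of_subset (Finset.powersetCard_mono hQsubIcc),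
      Finset.card_powersetCard, Finset.card_powersetCard, hQcard, Nat.card_Icc]
    have h1 : n - 1 + 1 - 1 = (n-5) + 4 := by omega
    rw [h1, choose_plus_four]
    have h6 : Nat.choose 4 2 = 6 := by decide
    omega
  -- Ṡ_{n-5}
  · have e3 : SdotSet n ℓ (n-5)
        = ↑(insert A ((A ×ˢ Q).image (fun p => insert p.2 (A.erase p.1)))) := by
      ext J
      simp only [SdotSet, Set.mem_setOf_eq, Finset.coe_insert, Set.mem_insert_iff,
        Finset.coe_image, Set.mem_image, Finset.mem_coe, Finset.mem_product]
      constructor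
      · rintro ⟨hsub, hcard, hsh⟩
        have hIcc1 : ∑ j ∈ Icc 1 (n-1), ℓ j = total - ℓ n := by
          have hh : Icc 1 n = insert n (Icc 1 (n-1)) := by
            ext x; simp [mem_Icc]; omega
          rw [htotal_def, hh, Finset.sum_insert (by simp [mem_Icc]; omega)]; ring
        have hcap : (J ∩ Q).card ≤ 1 := by
          by_contra hcontra
          push_neg at hcontra
          set K := Icc 1 (n-1) \ J with hK
          have hKsub : K ⊆ Icc 1 (n-1) := Finset.sdiff_subset
          have hKQcard : (K ∩ Q).card ≤ 2 := by
            have hKQ : K ∩ Q = Q \ J := by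
              ext x
              simp only [hK, mem_inter, mem_sdiff]
              constructor
              · rintro ⟨⟨-, h2⟩, h3⟩; exact ⟨h3, h2⟩
              · rintro ⟨h1, h2⟩; exact ⟨⟨hQsubIcc h1, h2⟩, h1⟩
            have hh := Finset.card_sdiff_add_card_inter Q J
            rw [Finset.inter_comm Q J] at hh
            rw [hKQ]; omega
          have hAQunion : A ∪ Q = Icc 1 (n-1) := by
            ext x; rw [Finset.mem_union]; exact (hIccAQ x).symm
          have hKeq : K = (K ∩ A) ∪ (K ∩ Q) := by
            rw [← Finset.inter_union_distrib_left, hAQunion,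
              Finset.inter_eq_left.2 hKsub]
          have hdisjK : Disjoint (K ∩ A) (K ∩ Q) := by
            rw [Finset.disjoint_left]; intro x hx hx'
            exact hAQdisj x (Finset.mem_inter.1 hx).2 (Finset.mem_inter.1 hx').2
          have hsumK : ∑ j ∈ K, ℓ j = ∑ j ∈ K ∩ A, ℓ j + ∑ j ∈ K ∩ Q, ℓ j := by
            conv_lhs => rw [hKeq]
            rw [Finset.sum_union hdisjK]
          have hb1 : ∑ j ∈ K ∩ A, ℓ j ≤ S5 := by
            rw [hS5_def]
            apply Finset.sum_le_sum_of_subset_of_nonneg Finset.inter_subset_right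
            intro i hi _
            rw [memA] at hi; exact (hposS i hi.1 (by omega)).le
          have hb2 : ∑ j ∈ K ∩ Q, ℓ j ≤ ℓ (n-2) + ℓ (n-1) := by
            have hKQsub : K ∩ Q ⊆ Q := Finset.inter_subset_right
            have hc : (K ∩ Q).card = 0 ∨ (K ∩ Q).card = 1 ∨ (K ∩ Q).card = 2 := by omega
            rcases hc with h|h|h
            · rw [Finset.card_eq_zero.1 h, Finset.sum_empty]
              have := hposS (n-2) (by omega) (by omega)
              have := hposS (n-1) (by omega) (by omega)
              linarith
            · obtain ⟨x, hx⟩ := Finset.card_eq_one.1 h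
              rw [hx, Finset.sum_singleton]
              have hxQ : x ∈ Q := hKQsub (hx ▸ Finset.mem_singleton_self x)
              have := hlen1 x hxQ
              have := hposS (n-2) (by omega) (by omega)
              linarith
            · obtain ⟨x, y, hxy, hx⟩ := Finset.card_eq_two.1 h
              have hxQ : x ∈ Q := hKQsub (by rw [hx]; simp)
              have hyQ : y ∈ Q := hKQsub (by rw [hx]; simp)
              rw [hx, Finset.sum_insert (by simpa using hxy), Finset.sum_singleton]
              rcases lt_or_gt_of_ne hxy with hlt | hlt
              · exact hpairQ x hxQ y hyQ hlt
              · linarith [hpairQ y hyQ x hxQ hlt]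
          have hKsum : ∑ j ∈ K, ℓ j = (total - ℓ n) - ∑ j ∈ J, ℓ j := by
            rw [hK, Finset.sum_sdiff_eq_sub hsub, hIcc1]
          rw [hshort _ hsub] at hsh
          linarith [htot.le, hkey]
        have hsubAQ : ∀ x ∈ J, x ∈ A ∨ x ∈ Q := fun x hx => (hIccAQ x).1 (hsub hx)
        have hc01 : (J ∩ Q).card = 0 ∨ (J ∩ Q).card = 1 := by omega
        rcases hc01 with h|h
        · left
          have hJA : J ⊆ A := by
            intro x hx
            rcases hsubAQ x hx with hA' | hQ'
            · exact hA'
            · exfalso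
              have hmem : x ∈ J ∩ Q := Finset.mem_inter.2 ⟨hx, hQ'⟩
              rw [Finset.card_eq_zero.1 h] at hmem
              simp at hmem
          exact Finset.eq_of_subset_of_card_le hJA (by omega)
        · right
          obtain ⟨q, hq⟩ := Finset.card_eq_one.1 h
          have hqJ : q ∈ J := (Finset.mem_inter.1 (hq ▸ Finset.mem_singleton_self q)).1
          have hqQ : q ∈ Q := (Finset.mem_inter.1 (hq ▸ Finset.mem_singleton_self q)).2
          have hn5 : 1 ≤ n - 5 := by
            have : 0 < J.card := Finset.card_pos.2 ⟨q, hqJ⟩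
            omega
          have hJq : (J.erase q).card = n - 5 - 1 := by
            rw [Finset.card_erase_of_mem hqJ, hcard]
          have hJqA : J.erase q ⊆ A := by
            intro x hx
            have hxJ : x ∈ J := Finset.erase_subset _ _ hx
            rcases hsubAQ x hxJ with hA' | hQ'
            · exact hA'
            · exfalso
              have hmem : x ∈ J ∩ Q := Finset.mem_inter.2 ⟨hxJ, hQ'⟩
              rw [hq] at hmem
              exact Finset.ne_of_mem_erase hx (Finset.mem_singleton.1 hmem)
          have hAd : (A \ J.erase q).card = 1 := by
            rw [Finset.card_sdiff_of_subset hJqA, hAcard, hJq]; omega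
          obtain ⟨x, hx⟩ := Finset.card_eq_one.1 hAd
          have hxA : x ∈ A := (Finset.mem_sdiff.1 (hx ▸ Finset.mem_singleton_self x)).1
          have hxJq : x ∉ J.erase q := (Finset.mem_sdiff.1 (hx ▸ Finset.mem_singleton_self x)).2
          refine ⟨(x, q), ⟨hxA, hqQ⟩, ?_⟩
          show insert q (A.erase x) = J
          have h1 : J.erase q = A.erase x := by
            apply Finset.eq_of_subset_of_card_le
            · intro y hy
              exact Finset.mem_erase.2 ⟨fun hyx => hxJq (hyx ▸ hy), hJqA hy⟩
            · rw [Finset.card_erase_of_mem hxA, hAcard, hJq]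
          rw [← h1]
          exact Finset.insert_erase hqJ
      · rintro (rfl | ⟨⟨x, q⟩, ⟨hxA, hqQ⟩, rfl⟩)
        · have hsub : A ⊆ Icc 1 (n-1) := by
            intro y hy; rw [memA] at hy; simp [mem_Icc]; omega
          refine ⟨hsub, hAcard, ?_⟩
          rw [hshort _ hsub, ← hS5_def]
          have := hposS (n-1) (by omega) (by omega)
          linarith [htot.le, hkey]
        · show (insert q (A.erase x)) ⊆ Icc 1 (n-1) ∧ _ ∧ _
          have hqA : q ∉ A.erase x := fun h => hAQdisj q (Finset.erase_subset _ _ h) hqQ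
          have hxn : 1 ≤ x ∧ x ≤ n-5 := (memA x).1 hxA
          have hsub : insert q (A.erase x) ⊆ Icc 1 (n-1) := by
            intro y hy
            rcases Finset.mem_insert.1 hy with rfl | h
            · exact hQsubIcc hqQ
            · have := (memA y).1 (Finset.erase_subset _ _ h); simp [mem_Icc]; omega
          refine ⟨hsub, ?_, ?_⟩
          · rw [Finset.card_insert_of_notMem hqA, Finset.card_erase_of_mem hxA, hAcard]
            omega
          · rw [hshort _ hsub, Finset.sum_insert hqA, Finset.sum_erase_eq_sub hxA, ← hS5_def]
            have h1 := hlen1 q hqQ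
            have h2 := hposS x hxn.1 (by omega)
            linarith [htot.le, hkey]
    have hAnotmem : A ∉ (A ×ˢ Q).image (fun p => insert p.2 (A.erase p.1)) := by
      rw [Finset.mem_image]
      rintro ⟨⟨x, q⟩, hmem, heq⟩
      rw [Finset.mem_product] at hmem
      have : q ∈ A := heq ▸ Finset.mem_insert_self q _
      exact hAQdisj q this hmem.2
    have hinj : Set.InjOn (fun p : ℕ × ℕ => insert p.2 (A.erase p.1)) ↑(A ×ˢ Q) := by
      rintro ⟨x, q⟩ h1 ⟨x', q'⟩ h2 heq
      rw [Finset.mem_coe, Finset.mem_product] at h1 h2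
      simp only at heq
      have hq : q ∉ A.erase x := fun h => hAQdisj q (Finset.erase_subset _ _ h) h1.2
      have hq' : q' ∉ A.erase x' := fun h => hAQdisj q' (Finset.erase_subset _ _ h) h2.2
      have hqq : q = q' := by
        have hmem : q ∈ insert q' (A.erase x') := heq ▸ Finset.mem_insert_self q _
        rcases Finset.mem_insert.1 hmem with h | h
        · exact h
        · exact absurd (Finset.erase_subset _ _ h) fun hh => hAQdisj q hh h1.2
      subst hqq
      have herase : A.erase x = A.erase x' := by
        have hh := congrArg (fun s => Finset.erase s q) heq
        rwa [Finset.erase_insert hq, Finset.erase_insert hq'] at hh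
      have hxx : x = x' := by
        by_contra hne
        have hmem : x ∈ A.erase x' := Finset.mem_erase.2 ⟨hne, h1.1⟩
        rw [← herase] at hmem
        exact (Finset.notMem_erase x A) hmem
      simp [hxx]
    rw [e3, Set.ncard_coe_finset, Finset.card_insert_of_notMem hAnotmem,
      Finset.card_image_of_injOn hinj, Finset.card_product, hAcard, hQcard]
    omega
  -- Ṡ_{n-4}
  · have e4 : SdotSet n ℓ (n-4) = ↑(Q.image (fun q => insert q A)) := by
      ext J
      simp only [SdotSet, Set.mem_setOf_eq, Finset.coe_image, Set.mem_image, Finset.mem_coe]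
      constructor
      · rintro ⟨hsub, hcard, hsh⟩
        set K := Icc 1 (n-1) \ J with hK
        have hKsub : K ⊆ Icc 1 (n-1) := Finset.sdiff_subset
        have hKcard : K.card = 3 := by
          rw [hK, Finset.card_sdiff_of_subset hsub, Nat.card_Icc, hcard]; omega
        have hcompl : Icc 1 n \ K = insert n J := by
          ext y
          constructor
          · intro hy
            obtain ⟨hy1, hy2⟩ := Finset.mem_sdiff.1 hy
            have hy1' := mem_Icc.1 hy1
            by_cases hyJ : y ∈ J
            · exact Finset.mem_insert.2 (Or.inr hyJ)
            · have : y ∉ Icc 1 (n-1) := fun hmem => hy2 (Finset.mem_sdiff.2 ⟨hmem, hyJ⟩)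
              rw [mem_Icc] at this
              have : y = n := by omega
              exact Finset.mem_insert.2 (Or.inl this)
          · intro hy
            rcases Finset.mem_insert.1 hy with rfl | hyJ
            · refine Finset.mem_sdiff.2 ⟨by simp [mem_Icc]; omega, fun h => ?_⟩
              have := mem_Icc.1 ((Finset.mem_sdiff.1 h).1)
              omega
            · have := mem_Icc.1 (hsub hyJ)
              refine Finset.mem_sdiff.2 ⟨by simp [mem_Icc]; omega, fun h => ?_⟩
              exact (Finset.mem_sdiff.1 h).2 hyJ
        have hKlong : Long n ℓ K := by
          unfold Long
          rw [hcompl]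
          exact hsh
        obtain ⟨φ, hinj, hmem, hmono, hle⟩ := hTmin K hKsub hKcard hKlong
        have m4 : n-4 ∈ ({n-4, n-3, n-2} : Finset ℕ) := by simp
        have m3 : n-3 ∈ ({n-4, n-3, n-2} : Finset ℕ) := by simp
        have m2 : n-2 ∈ ({n-4, n-3, n-2} : Finset ℕ) := by simp
        have hab : φ (n-4) < φ (n-3) := hmono _ m4 _ m3 (by omega)
        have hbc : φ (n-3) < φ (n-2) := hmono _ m3 _ m2 (by omega)
        have haK : φ (n-4) ∈ K := hmem _ m4
        have hbK : φ (n-3) ∈ K := hmem _ m3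
        have hcK : φ (n-2) ∈ K := hmem _ m2
        have ha4 : n-4 ≤ φ (n-4) := hle _ m4
        have hcle : φ (n-2) ≤ n-1 := (mem_Icc.1 (hKsub hcK)).2
        have habc_sub : ({φ (n-4), φ (n-3), φ (n-2)} : Finset ℕ) ⊆ K := by
          intro y hy
          simp only [Finset.mem_insert, Finset.mem_singleton] at hy
          rcases hy with rfl | rfl | rfl <;> assumption
        have habc_card : ({φ (n-4), φ (n-3), φ (n-2)} : Finset ℕ).card = 3 := by
          rw [Finset.card_insert_of_notMem (by simp; omega),
            Finset.card_insert_of_notMem (by simp; omega), Finset.card_singleton]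
        have hKeq : ({φ (n-4), φ (n-3), φ (n-2)} : Finset ℕ) = K :=
          Finset.eq_of_subset_of_card_le habc_sub (by omega)
        have hKQ : K ⊆ Q := by
          intro y hy
          rw [← hKeq] at hy
          simp only [Finset.mem_insert, Finset.mem_singleton] at hy
          rw [memQ]
          rcases hy with rfl | rfl | rfl <;> omega
        have hQKcard : (Q \ K).card = 1 := by
          rw [Finset.card_sdiff_of_subset hKQ, hQcard, hKcard]
        obtain ⟨q, hq⟩ := Finset.card_eq_one.1 hQKcard
        have hqQ : q ∈ Q := (Finset.mem_sdiff.1 (hq ▸ Finset.mem_singleton_self q)).1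
        have hqK : q ∉ K := (Finset.mem_sdiff.1 (hq ▸ Finset.mem_singleton_self q)).2
        refine ⟨q, hqQ, ?_⟩
        have hKq : K = Q.erase q := by
          apply Finset.eq_of_subset_of_card_le
          · intro y hy
            exact Finset.mem_erase.2 ⟨fun hyq => hqK (hyq ▸ hy), hKQ hy⟩
          · rw [Finset.card_erase_of_mem hqQ, hQcard, hKcard]
        have hJK : J = Icc 1 (n-1) \ K := by
          rw [hK, Finset.sdiff_sdiff_eq_self hsub]
        rw [hJK, hKq]
        have hqQ' := (memQ q).1 hqQ
        ext y
        simp only [Finset.mem_sdiff, Finset.mem_erase, mem_Icc, Finset.mem_insert, memA,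
          memQ]
        omega
      · rintro ⟨q, hqQ, rfl⟩
        have hqA : q ∉ A := fun h => hAQdisj q h hqQ
        have hsub : insert q A ⊆ Icc 1 (n-1) := by
          intro y hy
          rcases Finset.mem_insert.1 hy with rfl | h
          · exact hQsubIcc hqQ
          · rw [memA] at h; simp [mem_Icc]; omega
        refine ⟨hsub, ?_, ?_⟩
        · rw [Finset.card_insert_of_notMem hqA, hAcard]; omega
        · rw [hshort _ hsub, Finset.sum_insert hqA, ← hS5_def]
          have h1 := hlen1 q hqQ
          linarith [htot.le, hkey]
    have hinj4 : Set.InjOn (fun q => insert q A) ↑Q := by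
      intro q h1 q' h2 heq
      simp only at heq
      have hmem : q ∈ insert q' A := heq ▸ Finset.mem_insert_self q A
      rcases Finset.mem_insert.1 hmem with h | h
      · exact h
      · exact absurd h fun hh => hAQdisj q hh (Finset.mem_coe.1 h1)
    rw [e4, Set.ncard_coe_finset, Finset.card_image_of_injOn hinj4, hQcard]
end

section
/- Let ℓ be an ordered special length vector of type {i, n−2, n−1} with 1 ≤ i ≤ n−4. Then |Ṡ_{n−4}(ℓ)| = n−2−i. -/
open Finset

theorem aux1 (n : ℕ) (J : Finset ℕ) (hn : 5 ≤ n) (hJ : J ⊆ Finset.Icc 1 (n-1)) :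
    Finset.Icc 1 n \ (Finset.Icc 1 (n-1) \ J) = insert n J := by
  ext x
  simp only [mem_sdiff, mem_Icc, mem_insert, not_and, not_not]
  constructor
  · rintro ⟨⟨h1, h2⟩, h3⟩
    by_cases hx : x ∈ J
    · exact Or.inr hx
    · left
      by_contra hxn
      exact hx (h3 ⟨h1, by omega⟩)
  · rintro (rfl | hx)
    · exact ⟨⟨by omega, le_refl _⟩, fun h => absurd h.2 (by omega)⟩
    · have := hJ hx
      simp only [mem_Icc] at this
      exact ⟨⟨this.1, by omega⟩, fun _ => hx⟩

theorem aux2 (n : ℕ) (ℓ : ℕ → ℝ) (T : Finset ℕ) (hT : T ⊆ Finset.Icc 1 n) :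
    Long n ℓ T ↔ ∑ j ∈ Finset.Icc 1 n \ T, ℓ j < ∑ j ∈ T, ℓ j := by
  unfold Long Short
  rw [Finset.sdiff_sdiff_self_left, Finset.inter_eq_right.mpr hT]

theorem aux3 (n a : ℕ) (ℓ : ℕ → ℝ) (hn : 5 ≤ n) (ha : a < n - 2) :
    ∑ j ∈ ({a, n-2, n-1} : Finset ℕ), ℓ j = ℓ a + ℓ (n-2) + ℓ (n-1) := by
  rw [Finset.sum_insert (by simp; omega), Finset.sum_pair (by omega)]
  ring

theorem aux4 (n a : ℕ) (hn : 5 ≤ n) (ha : a < n - 2) :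
    ({a, n-2, n-1} : Finset ℕ).card = 3 := by
  rw [Finset.card_insert_of_notMem (by simp; omega),
      Finset.card_insert_of_notMem (by simp; omega), Finset.card_singleton]

theorem aux5 (n i j : ℕ) (ℓ : ℕ → ℝ) (hn : 5 ≤ n) (hi1 : 1 ≤ i) (hij : i ≤ j)
    (hj : j ≤ n - 3) (hord : OrderedVec n ℓ) (hL : Long n ℓ {i, n-2, n-1}) :
    Long n ℓ {j, n-2, n-1} := by
  have hiI : ({i, n-2, n-1} : Finset ℕ) ⊆ Finset.Icc 1 n := by
    intro x; simp only [mem_insert, mem_singleton, mem_Icc]; rintro (rfl|rfl|rfl) <;> omega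
  have hjI : ({j, n-2, n-1} : Finset ℕ) ⊆ Finset.Icc 1 n := by
    intro x; simp only [mem_insert, mem_singleton, mem_Icc]; rintro (rfl|rfl|rfl) <;> omega
  rw [aux2 n ℓ _ hiI] at hL
  rw [aux2 n ℓ _ hjI]
  have e1 := Finset.sum_sdiff (f := ℓ) hiI
  have e2 := Finset.sum_sdiff (f := ℓ) hjI
  have hle : ∑ x ∈ ({i, n-2, n-1} : Finset ℕ), ℓ x ≤ ∑ x ∈ ({j, n-2, n-1} : Finset ℕ), ℓ x := by
    rw [aux3 n i ℓ hn (by omega), aux3 n j ℓ hn (by omega)]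
    have := hord i j hi1 hij (by omega)
    linarith
  linarith

theorem aux6 (n i : ℕ) (T' : Finset ℕ) (hn : 5 ≤ n) (hi2 : i ≤ n-4)
    (hT'I : T' ⊆ Finset.Icc 1 (n-1)) (hc : T'.card = 3)
    (hd : DomLe {i, n-2, n-1} T') :
    ∃ a, i ≤ a ∧ a ≤ n - 3 ∧ T' = {a, n-2, n-1} := by
  obtain ⟨φ, hinj, hmem, hmono, hle⟩ := hd
  have hiT : i ∈ ({i, n-2, n-1} : Finset ℕ) := by simp
  have h2T : n-2 ∈ ({i, n-2, n-1} : Finset ℕ) := by simp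
  have h1T : n-1 ∈ ({i, n-2, n-1} : Finset ℕ) := by simp
  have hub : ∀ x ∈ T', x ≤ n - 1 := by
    intro x hx; exact (mem_Icc.mp (hT'I hx)).2
  have hc1 : φ (n-1) = n-1 := le_antisymm (hub _ (hmem _ h1T)) (hle _ h1T)
  have hc2 : φ (n-2) = n-2 := by
    have := hmono _ h2T _ h1T (by omega)
    have := hle _ h2T
    omega
  have ha1 : i ≤ φ i := hle _ hiT
  have ha2 : φ i < n - 2 := by
    have := hmono _ hiT _ h2T (by omega)
    omega
  refine ⟨φ i, ha1, by omega, ?_⟩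
  have hsub : ({φ i, n-2, n-1} : Finset ℕ) ⊆ T' := by
    intro x; simp only [mem_insert, mem_singleton]
    rintro (rfl|rfl|rfl)
    · exact hmem _ hiT
    · rw [← hc2]; exact hmem _ h2T
    · rw [← hc1]; exact hmem _ h1T
  have hc3 : ({φ i, n-2, n-1} : Finset ℕ).card = 3 := by
    rw [Finset.card_insert_of_notMem (by simp; omega),
        Finset.card_insert_of_notMem (by simp; omega), Finset.card_singleton]
  exact (Finset.eq_of_subset_of_card_le hsub (by omega)).symm

/-- For type {i,n−2,n−1} with 1 ≤ i ≤ n−4, |Ṡ_{n−4}(ℓ)| = n−2−i. -/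
theorem sdot_card_type_i (n i : ℕ) (ℓ : ℕ → ℝ) (hn : 5 ≤ n)
    (hi1 : 1 ≤ i) (hi2 : i ≤ n-4)
    (hpos : LengthVec n ℓ) (hord : OrderedVec n ℓ) (hgen : Generic n ℓ)
    (hspec : SpecialVec n ℓ) (hT : IsType n ℓ {i, n-2, n-1}) :
    (SdotSet n ℓ (n-4)).ncard = n - 2 - i := by
  obtain ⟨hTsub, hTcard, hTlong, hTmin⟩ := hT
  have key : SdotSet n ℓ (n-4) =
      ↑((Finset.Icc i (n-3)).image (fun a => Finset.Icc 1 (n-1) \ {a, n-2, n-1})) := by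
    ext J
    simp only [SdotSet, Set.mem_setOf_eq, Finset.coe_image, Set.mem_image, Finset.mem_coe,
      Finset.mem_image, Finset.mem_Icc]
    constructor
    · rintro ⟨hJsub, hJcard, hJshort⟩
      set T' := Finset.Icc 1 (n-1) \ J with hT'
      have hT'I : T' ⊆ Finset.Icc 1 (n-1) := Finset.sdiff_subset
      have hIcard : (Finset.Icc 1 (n-1)).card = n - 1 := by
        rw [Nat.card_Icc]; omega
      have hT'card : T'.card = 3 := by
        rw [Finset.card_sdiff_of_subset hJsub, hIcard, hJcard]; omega
      have hins : insert n J = Finset.Icc 1 n \ T' := (aux1 n J hn hJsub).symm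
      have hT'long : Long n ℓ T' := by
        unfold Long; rwa [← hins]
      obtain ⟨a, ha1, ha2, ha3⟩ := aux6 n i T' hn hi2 hT'I hT'card
        (hTmin T' hT'I hT'card hT'long)
      refine ⟨a, ⟨ha1, ha2⟩, ?_⟩
      rw [← ha3, hT', Finset.sdiff_sdiff_self_left, Finset.inter_eq_right.mpr hJsub]
    · rintro ⟨a, ⟨ha1, ha2⟩, rfl⟩
      have haI : ({a, n-2, n-1} : Finset ℕ) ⊆ Finset.Icc 1 (n-1) := by
        intro x; simp only [mem_insert, mem_singleton, mem_Icc]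
        rintro (rfl|rfl|rfl) <;> omega
      have hJsub : Finset.Icc 1 (n-1) \ ({a, n-2, n-1} : Finset ℕ) ⊆ Finset.Icc 1 (n-1) :=
        Finset.sdiff_subset
      refine ⟨hJsub, ?_, ?_⟩
      · rw [Finset.card_sdiff_of_subset haI, aux4 n a hn (by omega), Nat.card_Icc]; omega
      · have hcomp : Finset.Icc 1 (n-1) \ (Finset.Icc 1 (n-1) \ ({a, n-2, n-1} : Finset ℕ))
            = {a, n-2, n-1} := by
          rw [Finset.sdiff_sdiff_self_left, Finset.inter_eq_right.mpr haI]
        have := aux1 n _ hn hJsub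
        rw [hcomp] at this
        rw [← this]
        exact aux5 n i a ℓ hn hi1 ha1 ha2 hord hTlong
  rw [key, Set.ncard_coe_finset, Finset.card_image_of_injOn, Nat.card_Icc]
  · omega
  · intro a ha b hb hab
    simp only [Finset.coe_Icc, Set.mem_Icc] at ha hb
    simp only [] at hab
    have h1 : Finset.Icc 1 (n-1) \ (Finset.Icc 1 (n-1) \ ({a, n-2, n-1} : Finset ℕ))
        = Finset.Icc 1 (n-1) \ (Finset.Icc 1 (n-1) \ ({b, n-2, n-1} : Finset ℕ)) := by
      rw [hab]
    have haI : ({a, n-2, n-1} : Finset ℕ) ⊆ Finset.Icc 1 (n-1) := by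
      intro x; simp only [mem_insert, mem_singleton, mem_Icc]
      rintro (rfl|rfl|rfl) <;> omega
    have hbI : ({b, n-2, n-1} : Finset ℕ) ⊆ Finset.Icc 1 (n-1) := by
      intro x; simp only [mem_insert, mem_singleton, mem_Icc]
      rintro (rfl|rfl|rfl) <;> omega
    rw [Finset.sdiff_sdiff_self_left, Finset.inter_eq_right.mpr haI,
        Finset.sdiff_sdiff_self_left, Finset.inter_eq_right.mpr hbI] at h1
    have : a ∈ ({b, n-2, n-1} : Finset ℕ) := h1 ▸ (by simp : a ∈ ({a, n-2, n-1} : Finset ℕ))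
    simp only [mem_insert, mem_singleton] at this
    rcases this with rfl | rfl | rfl <;> omega
end

section
/- Let ℓ = (ℓ₁,…,ℓₙ) be an ordered generic length vector and ε > 0 sufficiently small. Then a subset J ⊆ {1,…,n+1} is short with respect to ℓ' = (ε, ℓ₁,…,ℓₙ) if and only if s(J − {1}) is short with respect to ℓ, where s(i) = i−1. More precisely, this holds whenever 2ε < min over subsets K ⊆ {1,…,n} of |∑_{j∈K} ℓⱼ − ∑_{j∉K} ℓⱼ|. -/
open Finset

lemma sum_shift (ℓ : ℕ → ℝ) (ε : ℝ) (S : Finset ℕ) (hS : ∀ b ∈ S, 1 ≤ b) :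
    ∑ j ∈ S, (if j = 1 then ε else ℓ (j-1)) =
      (if 1 ∈ S then ε else 0) + ∑ i ∈ (S.erase 1).image (fun i => i-1), ℓ i := by
  rw [Finset.sum_image (by
    intro a ha b hb hab
    simp only [Finset.mem_coe, Finset.mem_erase] at ha hb
    simp only at hab
    have := hS a ha.2; have := hS b hb.2
    omega)]
  have h2 : ∑ j ∈ S.erase 1, ℓ (j - 1) =
      ∑ j ∈ S.erase 1, (if j = 1 then ε else ℓ (j-1)) := by
    apply Finset.sum_congr rfl
    intro x hx
    rw [if_neg (Finset.mem_erase.mp hx).1]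
  rw [h2]
  by_cases h1 : 1 ∈ S
  · rw [if_pos h1]
    nth_rewrite 1 [← Finset.insert_erase h1]
    rw [Finset.sum_insert (Finset.notMem_erase 1 S), if_pos rfl]
  · rw [if_neg h1, Finset.erase_eq_of_notMem h1, zero_add]

lemma compl_shift (n : ℕ) (J : Finset ℕ) (hJ : J ⊆ Finset.Icc 1 (n+1)) :
    ((Finset.Icc 1 (n+1) \ J).erase 1).image (fun i => i-1) =
      Finset.Icc 1 n \ (J.erase 1).image (fun i => i-1) := by
  ext a
  simp only [Finset.mem_image, Finset.mem_erase, Finset.mem_sdiff, Finset.mem_Icc]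
  constructor
  · rintro ⟨b, ⟨hb1, ⟨hb2, hb3⟩⟩, rfl⟩
    refine ⟨by omega, ?_⟩
    rintro ⟨c, ⟨hc1, hc2⟩, hc3⟩
    have := Finset.mem_Icc.mp (hJ hc2)
    have : c = b := by omega
    exact hb3 (this ▸ hc2)
  · rintro ⟨⟨ha1, ha2⟩, h⟩
    refine ⟨a+1, ⟨by omega, ⟨by omega, ?_⟩⟩, by omega⟩
    intro hmem
    exact h ⟨a+1, ⟨by omega, hmem⟩, by omega⟩

/-- Prepending a sufficiently small ε to an ordered generic length
vector: J is short w.r.t. ℓ' = (ε,ℓ₁,…,ℓₙ) iff s(J − {1}) is short w.r.t. ℓ,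
where s(i) = i − 1. This holds whenever 2ε < |∑_K ℓ − ∑_{Kᶜ} ℓ| for all K. -/
theorem prepend_small_short_iff (n : ℕ) (ℓ : ℕ → ℝ) (ε : ℝ)
    (hpos : LengthVec n ℓ) (hord : OrderedVec n ℓ) (hgen : Generic n ℓ)
    (hε : 0 < ε)
    (hεsmall : ∀ K ⊆ Finset.Icc 1 n,
      2*ε < |∑ j ∈ K, ℓ j - ∑ j ∈ Finset.Icc 1 n \ K, ℓ j|) :
    ∀ J ⊆ Finset.Icc 1 (n+1),
      Short (n+1) (fun j => if j = 1 then ε else ℓ (j-1)) J ↔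
        Short n ℓ ((J.erase 1).image (fun i => i - 1)) := by
  intro J hJ
  set K := (J.erase 1).image (fun i => i - 1) with hKdef
  have hK : K ⊆ Finset.Icc 1 n := by
    intro a ha
    simp only [hKdef, Finset.mem_image, Finset.mem_erase] at ha
    obtain ⟨b, ⟨hb1, hb2⟩, rfl⟩ := ha
    have := Finset.mem_Icc.mp (hJ hb2)
    simp only [Finset.mem_Icc]; omega
  have hmin := hεsmall K hK
  unfold Short
  rw [sum_shift ℓ ε J (fun b hb => (Finset.mem_Icc.mp (hJ hb)).1),
      sum_shift ℓ ε (Finset.Icc 1 (n+1) \ J)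
        (fun b hb => (Finset.mem_Icc.mp (Finset.mem_sdiff.mp hb).1).1),
      compl_shift n J hJ]
  have h1mem : (1 ∈ Finset.Icc 1 (n+1) \ J) ↔ (1 ∉ J) := by
    simp [Finset.mem_sdiff, Finset.mem_Icc]
  rcases abs_cases (∑ j ∈ K, ℓ j - ∑ j ∈ Finset.Icc 1 n \ K, ℓ j) with ⟨he, _⟩ | ⟨he, _⟩ <;>
    rw [he] at hmin <;>
    by_cases h1 : 1 ∈ J <;>
    simp only [h1, h1mem, if_pos, if_neg, not_true, not_false_iff, if_true, if_false] <;>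
    constructor <;> intro <;> linarith
end

section
/- Let ℓ be an ordered generic length vector with {n−2,n−1} long with respect to ℓ. Then for every subset J ⊆ {1,…,n−1} with J ∪ {n} short, we have J ⊆ {1,…,n−3}; consequently Ṡ(ℓ) is the full power set of {1,…,n−3} and there is exactly one such chamber up to permutation. -/
open Finset

/-- If {n−2,n−1} is long, then J ∪ {n} short forces J ⊆ {1,…,n−3};
consequently Ṡ(ℓ) is the full power set of {1,…,n−3}. -/
theorem disconnected_chamber (n : ℕ) (ℓ : ℕ → ℝ) (hn : 3 ≤ n)
    (hpos : LengthVec n ℓ) (hord : OrderedVec n ℓ) (hgen : Generic n ℓ)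
    (hlong : Long n ℓ {n-2, n-1}) :
    (∀ J ⊆ Finset.Icc 1 (n-1), Short n ℓ (insert n J) → J ⊆ Finset.Icc 1 (n-3)) ∧
    Sdot n ℓ = {J : Finset ℕ | J ⊆ Finset.Icc 1 (n-3)} := by
  have hab : n - 2 ≠ n - 1 := by omega
  have hnonneg : ∀ i ∈ Finset.Icc 1 n, 0 ≤ ℓ i := fun i hi => (hpos i hi).le
  have hpairsub : ({n-2, n-1} : Finset ℕ) ⊆ Finset.Icc 1 n := by
    intro x hx
    simp only [Finset.mem_insert, Finset.mem_singleton] at hx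
    simp only [Finset.mem_Icc]
    rcases hx with rfl | rfl <;> omega
  -- Rewrite the long condition
  have hcompl : Finset.Icc 1 n \ (Finset.Icc 1 n \ ({n-2, n-1} : Finset ℕ)) = {n-2, n-1} := by
    rw [Finset.sdiff_sdiff_self_left]
    exact Finset.inter_eq_right.2 hpairsub
  unfold Long Short at hlong
  rw [hcompl, Finset.sum_sdiff_eq_sub hpairsub, Finset.sum_pair hab] at hlong
  -- hlong : T - (ℓ (n-2) + ℓ (n-1)) < ℓ (n-2) + ℓ (n-1)
  have hP1 : ∀ J ⊆ Finset.Icc 1 (n-1), Short n ℓ (insert n J) → J ⊆ Finset.Icc 1 (n-3) := by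
    intro J hJ hS x hx
    by_contra hxn
    have hxmem : x ∈ Finset.Icc 1 (n-1) := hJ hx
    simp only [Finset.mem_Icc] at hxmem hxn
    have hxab : x = n - 2 ∨ x = n - 1 := by omega
    have hnJ : n ∉ J := by
      intro h
      have := (Finset.mem_Icc.1 (hJ h)).2
      omega
    have hJsub : ∀ i ∈ J, i ∈ Finset.Icc 1 n := by
      intro i hi
      have := Finset.mem_Icc.1 (hJ hi)
      simp only [Finset.mem_Icc]; omega
    have hinssub : insert n J ⊆ Finset.Icc 1 n := by
      intro y hy
      rcases Finset.mem_insert.1 hy with rfl | hy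
      · simp only [Finset.mem_Icc]; omega
      · exact hJsub y hy
    unfold Short at hS
    rw [Finset.sum_sdiff_eq_sub hinssub] at hS
    have hge : ℓ n + ℓ x ≤ ∑ j ∈ insert n J, ℓ j := by
      rw [Finset.sum_insert hnJ]
      have : ℓ x ≤ ∑ j ∈ J, ℓ j :=
        Finset.single_le_sum (fun i hi => hnonneg i (hJsub i hi)) hx
      linarith
    -- so 2*(ℓ n + ℓ x) < T < 2*(ℓ(n-2)+ℓ(n-1)), hence ℓ n + ℓ x < ℓ(n-2)+ℓ(n-1)
    rcases hxab with rfl | rfl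
    · have h1 : ℓ (n-1) ≤ ℓ n := hord (n-1) n (by omega) (by omega) le_rfl
      linarith
    · have h1 : ℓ (n-2) ≤ ℓ n := hord (n-2) n (by omega) (by omega) le_rfl
      linarith
  refine ⟨hP1, ?_⟩
  ext J
  simp only [Sdot, Set.mem_setOf_eq]
  constructor
  · rintro ⟨h1, h2⟩
    exact hP1 J h1 h2
  · intro hJ3
    have hJ1 : J ⊆ Finset.Icc 1 (n-1) :=
      hJ3.trans (Finset.Icc_subset_Icc_right (by omega))
    refine ⟨hJ1, ?_⟩
    have hinssub2 : insert n J ⊆ Finset.Icc 1 n \ ({n-2, n-1} : Finset ℕ) := by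
      intro y hy
      simp only [Finset.mem_sdiff, Finset.mem_Icc, Finset.mem_insert,
        Finset.mem_singleton]
      rcases Finset.mem_insert.1 hy with rfl | hy
      · omega
      · have := Finset.mem_Icc.1 (hJ3 hy)
        omega
    have hinssub : insert n J ⊆ Finset.Icc 1 n :=
      hinssub2.trans (Finset.sdiff_subset)
    unfold Short
    rw [Finset.sum_sdiff_eq_sub hinssub]
    have hle : ∑ j ∈ insert n J, ℓ j ≤
        ∑ j ∈ Finset.Icc 1 n \ ({n-2, n-1} : Finset ℕ), ℓ j := by
      apply Finset.sum_le_sum_of_subset_of_nonneg hinssub2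
      intro i hi _
      exact hnonneg i (Finset.mem_sdiff.1 hi).1
    rw [Finset.sum_sdiff_eq_sub hpairsub, Finset.sum_pair hab] at hle
    linarith
end
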